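/- With the selfish-mining cycle-length distribution P(1) = p, P(2) = pq + pq², P(n) = p^{n−1} q^n C_{n−2} for n ≥ 3 (p + q = 1, 0 < q < 1/2), the expectation ∑_{n≥1} n·P(n) equals 1 + p²q/(p − q). -/

import Mathlib

open Finset

lemma sm_cb_cast (n : ℕ) : ((n : ℝ) + 1) * (catalan n : ℝ) = (Nat.centralBinom n : ℝ) := by
  have := succ_mul_catalan_eq_centralBinom n
  exact_mod_cast congrArg (fun m : ℕ => (m : ℝ)) this

lemma sm_cb_succ_cast (n : ℕ) :
    ((n : ℝ) + 1) * (Nat.centralBinom (n + 1) : ℝ)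
      = 2 * (2 * (n : ℝ) + 1) * (Nat.centralBinom n : ℝ) := by
  have := Nat.succ_mul_centralBinom_succ n
  exact_mod_cast congrArg (fun m : ℕ => (m : ℝ)) this

lemma sm_cb_le (n : ℕ) : (Nat.centralBinom n : ℝ) ≤ 4 ^ n := by
  have h1 : Nat.centralBinom n ≤ (2 * n + 1).choose n :=
    Nat.choose_le_choose n (Nat.le_succ _)
  have h2 := Nat.choose_middle_le_pow n
  exact_mod_cast (h1.trans h2)

lemma sm_catalan_le_cb (n : ℕ) : (catalan n : ℝ) ≤ (Nat.centralBinom n : ℝ) := by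
  have : catalan n ≤ Nat.centralBinom n := by
    have := succ_mul_catalan_eq_centralBinom n
    nlinarith [catalan n, Nat.le_mul_of_pos_left (catalan n) (Nat.succ_pos n)]
  exact_mod_cast this

lemma sm_two_mul_key (n : ℕ) :
    2 * ∑ k ∈ range (n + 1), catalan k * Nat.centralBinom (n - k)
      = Nat.centralBinom (n + 1) := by
  have hA : ∑ k ∈ range (n + 1), catalan k * Nat.centralBinom (n - k)
      = ∑ k ∈ range (n + 1), catalan (n - k) * Nat.centralBinom k := by
    rw [← Finset.sum_range_reflect]
    apply Finset.sum_congr rfl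
    intro k hk
    have hk' : k ≤ n := by simpa [Nat.lt_succ_iff] using hk
    have e1 : n + 1 - 1 - k = n - k := by omega
    have e2 : n - (n - k) = k := by omega
    rw [e1, e2]
  have hcat : ∑ k ∈ range (n + 1), catalan k * catalan (n - k) = catalan (n + 1) := by
    rw [catalan_succ']
    rw [Finset.Nat.sum_antidiagonal_eq_sum_range_succ (fun i j => catalan i * catalan j)]
  have key : 2 * ∑ k ∈ range (n + 1), catalan k * Nat.centralBinom (n - k)
      = (n + 2) * catalan (n + 1) := by
    calc 2 * ∑ k ∈ range (n + 1), catalan k * Nat.centralBinom (n - k)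
        = (∑ k ∈ range (n + 1), catalan k * Nat.centralBinom (n - k))
          + ∑ k ∈ range (n + 1), catalan (n - k) * Nat.centralBinom k := by
          rw [← hA]; ring
      _ = ∑ k ∈ range (n + 1), (n + 2) * (catalan k * catalan (n - k)) := by
          rw [← Finset.sum_add_distrib]
          apply Finset.sum_congr rfl
          intro k hk
          have hk' : k ≤ n := by simpa [Nat.lt_succ_iff] using hk
          rw [← succ_mul_catalan_eq_centralBinom, ← succ_mul_catalan_eq_centralBinom]
          obtain ⟨m, rfl⟩ : ∃ m, n = k + m := ⟨n - k, by omega⟩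
          have e : k + m - k = m := by omega
          rw [e]
          ring
      _ = (n + 2) * ∑ k ∈ range (n + 1), catalan k * catalan (n - k) := by
          rw [Finset.mul_sum]
      _ = (n + 2) * catalan (n + 1) := by rw [hcat]
  rw [key, ← succ_mul_catalan_eq_centralBinom]

lemma sm_partial (N : ℕ) :
    ∑ n ∈ range N, (catalan n : ℝ) * ((4 : ℝ)⁻¹) ^ n
      = 2 - 2 * (Nat.centralBinom N : ℝ) / 4 ^ N := by
  induction N with
  | zero => simp [Nat.centralBinom]
  | succ N ih =>
      rw [Finset.sum_range_succ, ih]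
      have h1 := sm_cb_cast N
      have h2 := sm_cb_succ_cast N
      have h4 : (4 : ℝ) ^ N ≠ 0 := by positivity
      have hN : ((N : ℝ) + 1) ≠ 0 := by positivity
      rw [pow_succ, inv_pow]
      field_simp
      apply mul_left_cancel₀ hN
      linear_combination 4 * h1 + 2 * h2

noncomputable def smCycleProb (p q : ℝ) (n : ℕ) : ℝ :=
  if n = 1 then p
  else if n = 2 then p * q + p * q ^ 2
  else p ^ (n - 1) * q ^ n * (catalan (n - 2) : ℝ)

theorem smCycleProb_expectation (p q : ℝ) (hpq : p + q = 1)
    (hq0 : 0 < q) (hq : q < 1/2) :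
    HasSum (fun n : ℕ => ((n : ℝ) + 1) * smCycleProb p q (n + 1))
      (1 + p ^ 2 * q / (p - q)) := by
  have hp : p = 1 - q := by linarith
  have hp0 : 0 < p := by rw [hp]; linarith
  have hpmq : 0 < p - q := by rw [hp]; linarith
  have hx0 : 0 < p * q := mul_pos hp0 hq0
  have h4x : 4 * (p * q) < 1 := by nlinarith [sq_nonneg (p - q)]
  have hx14 : p * q ≤ 4⁻¹ := by linarith
  -- summability
  have hgeo : Summable (fun n : ℕ => (4 * (p * q)) ^ n) :=
    summable_geometric_of_lt_one (by nlinarith) h4x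
  have hUb : ∀ n : ℕ, (Nat.centralBinom n : ℝ) * (p * q) ^ n ≤ (4 * (p * q)) ^ n := by
    intro n
    calc (Nat.centralBinom n : ℝ) * (p * q) ^ n
        ≤ 4 ^ n * (p * q) ^ n :=
          mul_le_mul_of_nonneg_right (sm_cb_le n) (pow_nonneg hx0.le n)
      _ = (4 * (p * q)) ^ n := (mul_pow 4 (p * q) n).symm
  have hUsum : Summable (fun n : ℕ => (Nat.centralBinom n : ℝ) * (p * q) ^ n) :=
    hgeo.of_nonneg_of_le (fun n => by positivity) hUb
  have hSsum : Summable (fun n : ℕ => (catalan n : ℝ) * (p * q) ^ n) :=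
    hgeo.of_nonneg_of_le (fun n => by positivity)
      (fun n => le_trans
        (mul_le_mul_of_nonneg_right (sm_catalan_le_cb n) (by positivity)) (hUb n))
  have hSnorm : Summable (fun n : ℕ => ‖(catalan n : ℝ) * (p * q) ^ n‖) :=
    summable_norm_iff.mpr hSsum
  have hUnorm : Summable (fun n : ℕ => ‖(Nat.centralBinom n : ℝ) * (p * q) ^ n‖) :=
    summable_norm_iff.mpr hUsum
  set S : ℝ := ∑' n : ℕ, (catalan n : ℝ) * (p * q) ^ n with hSdef
  set U : ℝ := ∑' n : ℕ, (Nat.centralBinom n : ℝ) * (p * q) ^ n with hUdef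
  -- the bound S ≤ 2
  have hS2 : S ≤ 2 := by
    apply Real.tsum_le_of_sum_range_le (fun n => by positivity)
    intro N
    calc ∑ n ∈ range N, (catalan n : ℝ) * (p * q) ^ n
        ≤ ∑ n ∈ range N, (catalan n : ℝ) * ((4:ℝ)⁻¹) ^ n := by
          apply Finset.sum_le_sum
          intro n _
          exact mul_le_mul_of_nonneg_left
            (pow_le_pow_left₀ hx0.le hx14 n) (by positivity)
      _ = 2 - 2 * (Nat.centralBinom N : ℝ) / 4 ^ N := sm_partial N
      _ ≤ 2 := by
          have : (0:ℝ) ≤ 2 * (Nat.centralBinom N : ℝ) / 4 ^ N := by positivity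
          linarith
  -- Cauchy products
  have hSS : S * S = ∑' n : ℕ, (catalan (n + 1) : ℝ) * (p * q) ^ n := by
    rw [hSdef, tsum_mul_tsum_eq_tsum_sum_antidiagonal_of_summable_norm hSnorm hSnorm]
    apply tsum_congr
    intro n
    rw [catalan_succ']
    push_cast
    rw [Finset.sum_mul]
    apply Finset.sum_congr rfl
    intro kl hkl
    have h := Finset.HasAntidiagonal.mem_antidiagonal.mp hkl
    rw [← h, pow_add]
    ring
  have hSU : S * U = ∑' n : ℕ,
      ((∑ k ∈ range (n + 1), catalan k * Nat.centralBinom (n - k) : ℕ) : ℝ) * (p * q) ^ n := by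
    rw [hSdef, hUdef, tsum_mul_tsum_eq_tsum_sum_antidiagonal_of_summable_norm hSnorm hUnorm]
    apply tsum_congr
    intro n
    rw [← Finset.Nat.sum_antidiagonal_eq_sum_range_succ
      (fun i j => catalan i * Nat.centralBinom j)]
    push_cast
    rw [Finset.sum_mul]
    apply Finset.sum_congr rfl
    intro kl hkl
    have h := Finset.HasAntidiagonal.mem_antidiagonal.mp hkl
    rw [← h, pow_add]
    ring
  -- shifted sums
  have hSshift : HasSum (fun n : ℕ => (catalan (n + 1) : ℝ) * (p * q) ^ (n + 1)) (S - 1) := by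
    apply (hasSum_nat_add_iff (f := fun n : ℕ => (catalan n : ℝ) * (p * q) ^ n) 1).mpr
    simpa using hSsum.hasSum
  have hUshift : HasSum (fun n : ℕ => (Nat.centralBinom (n + 1) : ℝ) * (p * q) ^ (n + 1))
      (U - 1) := by
    apply (hasSum_nat_add_iff
      (f := fun n : ℕ => (Nat.centralBinom n : ℝ) * (p * q) ^ n) 1).mpr
    have hU' : HasSum _ U := hUsum.hasSum
    simpa [Nat.centralBinom] using hU'
  -- functional equations
  have hSq : (p * q) * (S * S) = S - 1 := by
    rw [hSS, ← tsum_mul_left, ← hSshift.tsum_eq]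
    apply tsum_congr
    intro n
    ring
  have hSUeq : 2 * ((p * q) * (S * U)) = U - 1 := by
    rw [hSU, ← tsum_mul_left, ← tsum_mul_left, ← hUshift.tsum_eq]
    apply tsum_congr
    intro n
    have hk : ((2 * ∑ k ∈ range (n + 1), catalan k * Nat.centralBinom (n - k) : ℕ) : ℝ)
        = (Nat.centralBinom (n + 1) : ℝ) := by exact_mod_cast sm_two_mul_key n
    push_cast at hk ⊢
    linear_combination ((p * q) ^ (n + 1)) * hk
  -- solve for S
  have hpq4 : (p - q) ^ 2 = 1 - 4 * (p * q) := by linear_combination (p + q + 1) * hpq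
  have hsq : (1 - 2 * (p * q) * S) ^ 2 = (p - q) ^ 2 := by
    linear_combination 4 * (p * q) * hSq - hpq4
  have hposS : 0 < 1 - 2 * (p * q) * S := by nlinarith
  have heq : 1 - 2 * (p * q) * S = p - q := by
    have hz : (1 - 2 * (p * q) * S - (p - q)) * (1 - 2 * (p * q) * S + (p - q)) = 0 := by
      linear_combination hsq
    rcases mul_eq_zero.mp hz with h | h
    · linarith
    · nlinarith
  have hpS : p * S = 1 := by
    have h2q : (2 * q) * (p * S) = (2 * q) * 1 := by linear_combination -heq - hpq
    exact mul_left_cancel₀ (by positivity) h2q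
  have hUval : (p - q) * U = 1 := by
    linear_combination -hSUeq + (2 * q * U) * hpS + U * hpq
  -- base HasSum
  have hbase : HasSum
      (fun n : ℕ => q * (((Nat.centralBinom n : ℝ) + (catalan n : ℝ)) * (p * q) ^ (n + 1)))
      (q * (p * q) * (U + S)) := by
    have h := (hUsum.hasSum.add hSsum.hasSum).mul_left (q * (p * q))
    have hfg : (fun n : ℕ => q * (p * q) *
        ((Nat.centralBinom n : ℝ) * (p * q) ^ n + (catalan n : ℝ) * (p * q) ^ n))
        = fun n : ℕ =>
          q * (((Nat.centralBinom n : ℝ) + (catalan n : ℝ)) * (p * q) ^ (n + 1)) := by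
      funext n; ring
    rw [hfg] at h
    exact h
  have hb1 : HasSum
      (fun n : ℕ => q * (((Nat.centralBinom (n + 1) : ℝ) + (catalan (n + 1) : ℝ))
        * (p * q) ^ (n + 1 + 1)))
      (q * (p * q) * (U + S) - q * (2 * (p * q))) := by
    refine (hasSum_nat_add_iff (f := fun n : ℕ =>
      q * (((Nat.centralBinom n : ℝ) + (catalan n : ℝ)) * (p * q) ^ (n + 1))) 1).mpr ?_
    have h2 : q * (p * q) * (U + S) - q * (2 * (p * q))
        + ∑ i ∈ range 1, q * (((Nat.centralBinom i : ℝ) + (catalan i : ℝ)) * (p * q) ^ (i + 1))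
        = q * (p * q) * (U + S) := by
      simp [Nat.centralBinom]
      ring
    rw [h2]
    exact hbase
  -- identify the shifted function with the target
  have hfun : (fun n : ℕ => q * (((Nat.centralBinom (n + 1) : ℝ) + (catalan (n + 1) : ℝ))
        * (p * q) ^ (n + 1 + 1)))
      = fun n : ℕ => (((n + 2 : ℕ) : ℝ) + 1) * smCycleProb p q (n + 2 + 1) := by
    funext n
    have h1 : n + 2 + 1 ≠ 1 := by omega
    have h2 : n + 2 + 1 ≠ 2 := by omega
    rw [smCycleProb, if_neg h1, if_neg h2]
    have e1 : n + 2 + 1 - 1 = n + 2 := by omega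
    have e2 : n + 2 + 1 - 2 = n + 1 := by omega
    rw [e1, e2]
    have hcb := sm_cb_cast (n + 1)
    push_cast at hcb ⊢
    linear_combination (-(q * p ^ (n + 2) * q ^ (n + 2))) * hcb
  rw [hfun] at hb1
  -- final assembly
  refine (hasSum_nat_add_iff'
    (f := fun n : ℕ => ((n : ℝ) + 1) * smCycleProb p q (n + 1)) 2).mp ?_
  have hval : q * (p * q) * (U + S) - q * (2 * (p * q))
      = 1 + p ^ 2 * q / (p - q)
        - ∑ i ∈ range 2, ((i : ℝ) + 1) * smCycleProb p q (i + 1) := by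
    have hSval : S = 1 / p := by
      rw [eq_div_iff (ne_of_gt hp0)]
      linear_combination hpS
    have hUval' : U = 1 / (p - q) := by
      rw [eq_div_iff (ne_of_gt hpmq)]
      linear_combination hUval
    rw [hSval, hUval']
    simp [Finset.sum_range_succ, smCycleProb]
    rw [hp]
    have hne1 : (1 : ℝ) - q ≠ 0 := by linarith
    have hne2 : (1 : ℝ) - q - q ≠ 0 := by linarith
    field_simp
    ring
  rw [← hval]
  exact hb1
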